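/- Every URL-map f : X → Y between length spaces is a weak submetry, i.e., for every open ball U(p,r) in X, f(U(p,r)) = U(f(p),r). -/
import Mathlib


open Set

/-- A length space: a metric space with at least two points in which any two points
are joined by paths of length arbitrarily close to the distance between them. -/
def IsLengthSpace (X : Type*) [MetricSpace X] : Prop :=
  (∃ x y : X, x ≠ y) ∧
  ∀ x y : X, ∀ ε : ℝ, 0 < ε → ∃ (c : ℝ → X) (b : ℝ), 0 ≤ b ∧
    ContinuousOn c (Icc 0 b) ∧ c 0 = x ∧ c b = y ∧
    eVariationOn c (Icc 0 b) < ENNReal.ofReal (dist x y + ε)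

/-- `c : [a,b] → X` is a rectifiable path: continuous with finite length. -/
def IsRectPath {X : Type*} [MetricSpace X] (c : ℝ → X) (a b : ℝ) : Prop :=
  a ≤ b ∧ ContinuousOn c (Icc a b) ∧ eVariationOn c (Icc a b) ≠ ⊤

/-- `cL` is a lift of the path `c : [a,b] → Y` through `f` starting at `q`. -/
def IsLift {X Y : Type*} [MetricSpace X] [MetricSpace Y] (f : X → Y) (c : ℝ → Y)
    (a b : ℝ) (q : X) (cL : ℝ → X) : Prop :=
  ContinuousOn cL (Icc a b) ∧ cL a = q ∧ ∀ t ∈ Icc a b, f (cL t) = c t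

/-- A URL-map (unique rectifiable lifting map): (I) `f` preserves lengths of
rectifiable paths; (II) every rectifiable path in `Y` lifts uniquely through `f`
starting at any prescribed point of the fiber over its initial point, and the lift
is rectifiable. -/
def IsURLMap {X Y : Type*} [MetricSpace X] [MetricSpace Y] (f : X → Y) : Prop :=
  (∀ (c : ℝ → X) (a b : ℝ), IsRectPath c a b →
    eVariationOn (f ∘ c) (Icc a b) = eVariationOn c (Icc a b)) ∧
  (∀ (c : ℝ → Y) (a b : ℝ), IsRectPath c a b → ∀ q : X, f q = c a →
    (∃ cL : ℝ → X, IsLift f c a b q cL ∧ eVariationOn cL (Icc a b) ≠ ⊤) ∧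
    (∀ cL cL' : ℝ → X, IsLift f c a b q cL → IsLift f c a b q cL' →
      EqOn cL cL' (Icc a b)))

/-- Every URL-map between length spaces is a weak submetry:
`f(U(p,r)) = U(f(p),r)` for every open ball. -/
theorem urlMap_weak_submetry {X Y : Type*} [MetricSpace X] [MetricSpace Y]
    (hX : IsLengthSpace X) (hY : IsLengthSpace Y) (f : X → Y) (hf : IsURLMap f) :
    ∀ (p : X) (r : ℝ), f '' Metric.ball p r = Metric.ball (f p) r := by
  intro p r
  apply Subset.antisymm
  · -- f is 1-Lipschitz via length preservation and length space X
    rintro _ ⟨x, hx, rfl⟩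
    rw [Metric.mem_ball] at hx ⊢
    have key : dist (f x) (f p) ≤ dist x p := by
      refine le_of_forall_pos_le_add ?_
      intro ε hε
      obtain ⟨c, b, hb, hc, hc0, hcb, hlen⟩ := hX.2 x p ε hε
      have hrect : IsRectPath c 0 b := ⟨hb, hc, hlen.ne_top⟩
      have h1 : eVariationOn (f ∘ c) (Icc 0 b) = eVariationOn c (Icc 0 b) :=
        hf.1 c 0 b hrect
      have h2 : edist (f x) (f p) ≤ eVariationOn (f ∘ c) (Icc 0 b) := by
        have := eVariationOn.edist_le (f ∘ c) (x := (0:ℝ)) (y := b)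
          (Set.left_mem_Icc.mpr hb) (Set.right_mem_Icc.mpr hb)
        simpa [Function.comp, hc0, hcb] using this
      have h3 : edist (f x) (f p) < ENNReal.ofReal (dist x p + ε) :=
        lt_of_le_of_lt (h2.trans_eq h1) hlen
      rw [edist_dist] at h3
      have := (ENNReal.ofReal_lt_ofReal_iff_of_nonneg dist_nonneg).mp h3
      linarith
    linarith
  · -- lifting
    intro y hy
    rw [Metric.mem_ball] at hy
    set ε := (r - dist y (f p)) / 2 with hεdef
    have hε : 0 < ε := by simp [hεdef]; linarith
    obtain ⟨c, b, hb, hc, hc0, hcb, hlen⟩ := hY.2 (f p) y ε hε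
    have hrect : IsRectPath c 0 b := ⟨hb, hc, hlen.ne_top⟩
    obtain ⟨⟨cL, ⟨hcLcont, hcL0, hcLlift⟩, hcLfin⟩, -⟩ :=
      hf.2 c 0 b hrect p (by rw [hc0])
    have hrectL : IsRectPath cL 0 b := ⟨hb, hcLcont, hcLfin⟩
    have hlenL : eVariationOn cL (Icc 0 b) = eVariationOn c (Icc 0 b) := by
      rw [← hf.1 cL 0 b hrectL]
      exact eVariationOn.eq_of_eqOn fun t ht => hcLlift t ht
    refine ⟨cL b, ?_, ?_⟩
    · rw [Metric.mem_ball]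
      have h2 : edist (cL b) p ≤ eVariationOn cL (Icc 0 b) := by
        have := eVariationOn.edist_le cL (x := b) (y := (0:ℝ))
          (Set.right_mem_Icc.mpr hb) (Set.left_mem_Icc.mpr hb)
        simpa [hcL0] using this
      have h3 : edist (cL b) p < ENNReal.ofReal r := by
        refine lt_of_le_of_lt (h2.trans_eq hlenL) (lt_of_lt_of_le hlen ?_)
        apply ENNReal.ofReal_le_ofReal
        rw [dist_comm]
        linarith
      rw [edist_dist] at h3
      exact (ENNReal.ofReal_lt_ofReal_iff_of_nonneg dist_nonneg).mp h3
    · rw [hcLlift b (Set.right_mem_Icc.mpr hb), hcb]
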